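/- Let K be a complete field extension of ℚ_p with a multiplicative nonarchimedean absolute value extending |·|_p, and let α ∈ ℤ_p ⊆ K be neither a positive integer nor a p-adic Liouville number. Let V be the K-vector space of sequences a : ℕ≥1 → K such that there exists μ ∈ (0,1) with |a_j|/μ^j → 0 as j → ∞. Then the K-linear map T : V → V defined by (T a)_j = (α − j)·a_j is bijective. -/
import Mathlib


open Filter

/-- A `p`-adic integer `α` is a `p`-adic Liouville number if
`liminf ‖n - α‖^(1/n) < 1` or `liminf ‖n + α‖^(1/n) < 1`. -/
def IsPadicLiouville (p : ℕ) [Fact p.Prime] (α : ℤ_[p]) : Prop :=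
  liminf (fun n : ℕ => ‖(n : ℤ_[p]) - α‖ ^ ((1 : ℝ) / n)) atTop < 1 ∨
  liminf (fun n : ℕ => ‖(n : ℤ_[p]) + α‖ ^ ((1 : ℝ) / n)) atTop < 1

/-- The space of sequences `(a_j)_{j ≥ 1}` in `K` such that `‖a_j‖/μ^j → 0` for some
`μ ∈ (0,1)`.  (Here the sequence `a : ℕ → K` records `a_{j+1}` at index `j`.) -/
def DecaySeq (K : Type*) [NormedField K] : Set (ℕ → K) :=
  {a | ∃ μ : ℝ, 0 < μ ∧ μ < 1 ∧
    Tendsto (fun j : ℕ => ‖a j‖ / μ ^ j) atTop (nhds 0)}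

private lemma norm_c_aux (p : ℕ) [Fact p.Prime] {K : Type*} [NontriviallyNormedField K]
    [NormedAlgebra ℚ_[p] K] (hext : ∀ q : ℚ_[p], ‖algebraMap ℚ_[p] K q‖ = ‖q‖)
    (α : ℤ_[p]) (j : ℕ) :
    ‖algebraMap ℚ_[p] K (α : ℚ_[p]) - ((j : K) + 1)‖ = ‖((j : ℤ_[p]) + 1) - α‖ := by
  have h1 : ((j : K) + 1) = algebraMap ℚ_[p] K ((j : ℚ_[p]) + 1) := by
    push_cast; ring
  rw [h1, ← map_sub, hext, PadicInt.norm_def]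
  push_cast
  rw [norm_sub_rev]

/-- Let `K` be a complete nonarchimedean field extension of `ℚ_p`, and `α ∈ ℤ_p` neither a
positive integer nor a `p`-adic Liouville number.  Then the operator
`(a_j)_{j ≥ 1} ↦ ((α - j)·a_j)_{j ≥ 1}` is a bijection of the space `V` of sequences with
`‖a_j‖/μ^j → 0` for some `μ ∈ (0,1)`. -/
theorem bijOn_mul_sub_of_not_liouville (p : ℕ) [Fact p.Prime]
    {K : Type*} [NontriviallyNormedField K] [CompleteSpace K] [NormedAlgebra ℚ_[p] K]
    (hna : ∀ x y : K, ‖x + y‖ ≤ max ‖x‖ ‖y‖)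
    (hext : ∀ q : ℚ_[p], ‖algebraMap ℚ_[p] K q‖ = ‖q‖)
    (α : ℤ_[p]) (hpos : ∀ k : ℕ, 0 < k → (k : ℤ_[p]) ≠ α)
    (hL : ¬ IsPadicLiouville p α) :
    Set.BijOn
      (fun (a : ℕ → K) (j : ℕ) =>
        (algebraMap ℚ_[p] K (α : ℚ_[p]) - ((j : K) + 1)) * a j)
      (DecaySeq K) (DecaySeq K) := by
  set c : ℕ → K := fun j => algebraMap ℚ_[p] K (α : ℚ_[p]) - ((j : K) + 1) with hc
  have hcnorm : ∀ j, ‖c j‖ = ‖((j : ℤ_[p]) + 1) - α‖ := fun j => norm_c_aux p hext α j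
  have hcne : ∀ j, c j ≠ 0 := by
    intro j h
    have h2 : ‖((j : ℤ_[p]) + 1) - α‖ = 0 := by rw [← hcnorm j, h, norm_zero]
    have h3 : ((j : ℤ_[p]) + 1) = α := by
      have := sub_eq_zero.mp (norm_eq_zero.mp h2); exact this
    exact hpos (j + 1) (Nat.succ_pos j) (by push_cast; exact h3)
  have hcle : ∀ j, ‖c j‖ ≤ 1 := fun j => (hcnorm j) ▸ PadicInt.norm_le_one _
  -- liminf ≥ 1
  have hliminf : (1 : ℝ) ≤ liminf (fun n : ℕ => ‖(n : ℤ_[p]) - α‖ ^ ((1 : ℝ) / n)) atTop := by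
    by_contra h
    exact hL (Or.inl (not_le.mp h))
  -- key decay fact: for any 0 < r < 1, r^j / ‖c j‖ → 0
  have key : ∀ r : ℝ, 0 < r → r < 1 →
      Tendsto (fun j : ℕ => r ^ j / ‖c j‖) atTop (nhds 0) := by
    intro r hr0 hr1
    obtain ⟨r', hrr', hr'1⟩ := exists_between hr1
    have hr'0 : 0 < r' := hr0.trans hrr'
    -- eventually r'^n < ‖n - α‖
    have hbdd : IsBoundedUnder (· ≥ ·) atTop
        (fun n : ℕ => ‖(n : ℤ_[p]) - α‖ ^ ((1 : ℝ) / n)) :=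
      isBoundedUnder_of ⟨0, fun n => Real.rpow_nonneg (norm_nonneg _) _⟩
    have hev : ∀ᶠ n : ℕ in atTop, r' < ‖(n : ℤ_[p]) - α‖ ^ ((1 : ℝ) / n) :=
      eventually_lt_of_lt_liminf (lt_of_lt_of_le hr'1 hliminf) hbdd
    have hev2 : ∀ᶠ n : ℕ in atTop, r' ^ n < ‖(n : ℤ_[p]) - α‖ := by
      filter_upwards [hev, eventually_ge_atTop 1] with n hn hn1
      have hnR : (0 : ℝ) < n := by exact_mod_cast hn1
      have := Real.rpow_lt_rpow (le_of_lt hr'0) hn (by exact_mod_cast hnR : (0:ℝ) < (n:ℝ))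
      rw [← Real.rpow_natCast r' n]
      calc r' ^ (n : ℝ) < (‖(n : ℤ_[p]) - α‖ ^ ((1 : ℝ) / n)) ^ (n : ℝ) := this
        _ = ‖(n : ℤ_[p]) - α‖ := by
          rw [← Real.rpow_mul (norm_nonneg _), one_div, inv_mul_cancel₀ (ne_of_gt hnR),
            Real.rpow_one]
    -- transfer to c j with n = j + 1
    have hev3 : ∀ᶠ j : ℕ in atTop, r' ^ (j + 1) < ‖c j‖ := by
      have := (tendsto_add_atTop_nat 1).eventually hev2
      filter_upwards [this] with j hj
      rw [hcnorm j]
      have : ((j + 1 : ℕ) : ℤ_[p]) = (j : ℤ_[p]) + 1 := by push_cast; ring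
      rw [← this]; exact hj
    -- squeeze
    have hgeo : Tendsto (fun j : ℕ => (r / r') ^ j / r') atTop (nhds 0) := by
      have : Tendsto (fun j : ℕ => (r / r') ^ j) atTop (nhds 0) :=
        tendsto_pow_atTop_nhds_zero_of_lt_one (by positivity)
          ((div_lt_one hr'0).mpr hrr')
      simpa using this.div_const r'
    refine squeeze_zero' ?_ ?_ hgeo
    · filter_upwards [] with j
      have : 0 < ‖c j‖ := norm_pos_iff.mpr (hcne j)
      positivity
    · filter_upwards [hev3] with j hj
      have hcj : 0 < ‖c j‖ := norm_pos_iff.mpr (hcne j)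
      rw [div_pow, div_div, div_le_div_iff₀ hcj (by positivity)]
      calc r ^ j * (r' ^ j * r') = r ^ j * r' ^ (j + 1) := by ring
        _ ≤ r ^ j * ‖c j‖ := mul_le_mul_of_nonneg_left hj.le (by positivity)
  constructor
  · -- MapsTo
    rintro a ⟨μ, hμ0, hμ1, ha⟩
    refine ⟨μ, hμ0, hμ1, ?_⟩
    refine squeeze_zero' ?_ ?_ ha
    · filter_upwards [] with j; positivity
    · filter_upwards [] with j
      simp only [norm_mul]
      have h1 : ‖c j‖ * ‖a j‖ ≤ ‖a j‖ := by
        nlinarith [norm_nonneg (a j), norm_nonneg (c j), hcle j]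
      exact div_le_div_of_nonneg_right h1 (by positivity)
  refine ⟨?_, ?_⟩
  · -- InjOn
    rintro a _ b _ hab
    funext j
    have := congrFun hab j
    exact mul_left_cancel₀ (hcne j) this
  · -- SurjOn
    rintro b ⟨μ, hμ0, hμ1, hb⟩
    refine ⟨fun j => (c j)⁻¹ * b j, ?_, ?_⟩
    · obtain ⟨μ', hμμ', hμ'1⟩ := exists_between hμ1
      have hμ'0 : 0 < μ' := hμ0.trans hμμ'
      refine ⟨μ', hμ'0, hμ'1, ?_⟩
      have hr : 0 < μ / μ' := by positivity
      have hr1 : μ / μ' < 1 := (div_lt_one hμ'0).mpr hμμ'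
      have hprod := hb.mul (key (μ / μ') hr hr1)
      rw [mul_zero] at hprod
      have heq : (fun j : ℕ => ‖(c j)⁻¹ * b j‖ / μ' ^ j)
          = fun j : ℕ => ‖b j‖ / μ ^ j * ((μ / μ') ^ j / ‖c j‖) := by
        funext j
        have hcj : ‖c j‖ ≠ 0 := norm_ne_zero_iff.mpr (hcne j)
        rw [norm_mul, norm_inv, div_pow]
        field_simp
        try ring
        try exact Or.inl trivial
      exact heq ▸ hprod
    · funext j
      simp only
      rw [mul_inv_cancel_left₀ (hcne j)]
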